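/- Let Z and U be Hilbert spaces and G : U → Z a bounded linear operator with Gramian Q = G G*. If the range of G is dense in Z, then for every z ∈ Z, α (α I + Q)^{-1} z → 0 as α → 0+. -/

import Mathlib

open scoped InnerProductSpace Topology

/-- If G has dense range, then α (α I + Q)⁻¹ z → 0 as α → 0⁺,
where Q = G G*. The inverse is given by a family R α satisfying the inverse identities. -/
theorem resolvent_tendsto_zero_of_denseRange
    {U Z : Type*} [NormedAddCommGroup U] [InnerProductSpace ℝ U] [CompleteSpace U]
    [NormedAddCommGroup Z] [InnerProductSpace ℝ Z] [CompleteSpace Z]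
    (G : U →L[ℝ] Z) (Q : Z →L[ℝ] Z) (hQ : Q = G ∘L ContinuousLinearMap.adjoint G)
    (R : ℝ → Z →L[ℝ] Z)
    (hR : ∀ α : ℝ, 0 < α →
      (R α) ∘L (α • (1 : Z →L[ℝ] Z) + Q) = 1 ∧ (α • (1 : Z →L[ℝ] Z) + Q) ∘L (R α) = 1)
    (hdense : DenseRange G) :
    ∀ z : Z, Filter.Tendsto (fun α : ℝ => α • R α z) (𝓝[>] 0) (𝓝 0) := by
  -- ⟨Q y, y⟩ = ‖G* y‖²
  have hQpos : ∀ y : Z, ⟪Q y, y⟫_ℝ = ‖ContinuousLinearMap.adjoint G y‖ ^ 2 := by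
    intro y
    rw [hQ]
    simp only [ContinuousLinearMap.comp_apply]
    rw [← ContinuousLinearMap.adjoint_inner_right G]
    exact real_inner_self_eq_norm_sq _
  -- uniform bound : α ‖R α z‖ ≤ ‖z‖
  have hbound : ∀ α : ℝ, 0 < α → ∀ z : Z, α * ‖R α z‖ ≤ ‖z‖ := by
    intro α hα z
    set y := R α z with hy
    have hz : α • y + Q y = z := by
      have := (hR α hα).2
      have := congrArg (fun T : Z →L[ℝ] Z => T z) this
      simpa [ContinuousLinearMap.comp_apply, ContinuousLinearMap.add_apply,
        ContinuousLinearMap.smul_apply] using this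
    have h1 : α * ‖y‖ ^ 2 ≤ ⟪z, y⟫_ℝ := by
      have : ⟪z, y⟫_ℝ = α * ‖y‖ ^ 2 + ⟪Q y, y⟫_ℝ := by
        rw [← hz]
        rw [inner_add_left, real_inner_smul_left, real_inner_self_eq_norm_sq]
      rw [this]
      have := hQpos y
      nlinarith [sq_nonneg (‖ContinuousLinearMap.adjoint G y‖)]
    have h2 : ⟪z, y⟫_ℝ ≤ ‖z‖ * ‖y‖ := real_inner_le_norm z y
    rcases eq_or_lt_of_le (norm_nonneg y) with h | h
    · rw [← h]; simp [norm_nonneg]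
    · have : α * ‖y‖ ^ 2 ≤ ‖z‖ * ‖y‖ := le_trans h1 h2
      nlinarith
  -- convergence on range of Q
  have hQrange : ∀ α : ℝ, 0 < α → ∀ w : Z, ‖α • R α (Q w)‖ ≤ 2 * α * ‖w‖ := by
    intro α hα w
    have key : R α (Q w) = w - α • R α w := by
      have h1 := (hR α hα).1
      have h1' := congrArg (fun T : Z →L[ℝ] Z => T w) h1
      simp only [ContinuousLinearMap.comp_apply, ContinuousLinearMap.add_apply,
        ContinuousLinearMap.smul_apply, ContinuousLinearMap.one_apply] at h1'
      have : R α (α • w + Q w) = w := h1'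
      rw [map_add, map_smul] at this
      exact eq_sub_of_add_eq' this
    rw [key]
    have : α • (w - α • R α w) = α • w - α • (α • R α w) := by
      rw [smul_sub]
    rw [this]
    have hb := hbound α hα w
    calc ‖α • w - α • (α • R α w)‖ ≤ ‖α • w‖ + ‖α • (α • R α w)‖ := norm_sub_le _ _
      _ ≤ α * ‖w‖ + α * ‖w‖ := by
          have e1 : ‖α • w‖ = α * ‖w‖ := by
            rw [norm_smul, Real.norm_eq_abs, abs_of_pos hα]
          have e2 : ‖α • (α • R α w)‖ = α * (α * ‖R α w‖) := by
            rw [norm_smul, norm_smul, Real.norm_eq_abs, abs_of_pos hα]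
          rw [e1, e2]
          have : α * (α * ‖R α w‖) ≤ α * ‖w‖ :=
            mul_le_mul_of_nonneg_left hb hα.le
          linarith
      _ = 2 * α * ‖w‖ := by ring
  -- range of Q is dense
  have hQdense : DenseRange Q := by
    have htop : (LinearMap.range (Q : Z →ₗ[ℝ] Z)).topologicalClosure = ⊤ := by
      rw [Submodule.topologicalClosure_eq_top_iff, Submodule.eq_bot_iff]
      intro z hz
      rw [Submodule.mem_orthogonal] at hz
      have hQz : ⟪Q z, z⟫_ℝ = 0 := hz (Q z) (LinearMap.mem_range.2 ⟨z, rfl⟩)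
      have hGz : ContinuousLinearMap.adjoint G z = 0 := by
        rw [hQpos z] at hQz
        have := pow_eq_zero_iff (n := 2) (by norm_num) |>.1 hQz
        exact norm_eq_zero.1 this
      -- z is orthogonal to the range of G
      have hperp : ∀ u : U, ⟪G u, z⟫_ℝ = 0 := by
        intro u
        rw [← ContinuousLinearMap.adjoint_inner_right G, hGz, inner_zero_right]
      have : z ∈ (LinearMap.range (G : U →ₗ[ℝ] Z))ᗮ := by
        rw [Submodule.mem_orthogonal]
        rintro u ⟨v, rfl⟩
        exact hperp v
      have hGtop : (LinearMap.range (G : U →ₗ[ℝ] Z)).topologicalClosure = ⊤ := by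
        rw [← Submodule.dense_iff_topologicalClosure_eq_top]
        simpa [Set.range_comp, LinearMap.coe_range, DenseRange] using hdense
      rw [Submodule.topologicalClosure_eq_top_iff] at hGtop
      rw [hGtop] at this
      simpa using this
    have : Dense (Set.range Q : Set Z) := by
      have := Submodule.dense_iff_topologicalClosure_eq_top.2 htop
      simpa [LinearMap.coe_range] using this
    exact this
  intro z
  rw [Metric.tendsto_nhdsWithin_nhds]
  intro ε hε
  obtain ⟨w, hw⟩ := Metric.denseRange_iff.1 hQdense z (ε / 2) (by linarith)
  refine ⟨ε / (4 * (‖w‖ + 1)), by positivity, ?_⟩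
  intro α hα hαδ
  have hα' : 0 < α := hα
  rw [Real.dist_eq, sub_zero, abs_of_pos hα'] at hαδ
  rw [dist_eq_norm, sub_zero]
  have hsplit : α • R α z = α • R α (z - Q w) + α • R α (Q w) := by
    rw [← smul_add, ← map_add, sub_add_cancel]
  rw [hsplit]
  have h1 : ‖α • R α (z - Q w)‖ < ε / 2 := by
    rw [norm_smul, Real.norm_eq_abs, abs_of_pos hα']
    calc α * ‖R α (z - Q w)‖ ≤ ‖z - Q w‖ := hbound α hα' _
      _ < ε / 2 := by rw [← dist_eq_norm]; exact hw
  have h2 : ‖α • R α (Q w)‖ < ε / 2 := by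
    calc ‖α • R α (Q w)‖ ≤ 2 * α * ‖w‖ := hQrange α hα' w
      _ ≤ 2 * α * (‖w‖ + 1) := by nlinarith
      _ < 2 * (ε / (4 * (‖w‖ + 1))) * (‖w‖ + 1) := by
          have hw1 : (0:ℝ) < ‖w‖ + 1 := by positivity
          nlinarith
      _ = ε / 2 := by field_simp; ring
  calc ‖α • R α (z - Q w) + α • R α (Q w)‖
      ≤ ‖α • R α (z - Q w)‖ + ‖α • R α (Q w)‖ := norm_add_le _ _
    _ < ε / 2 + ε / 2 := by linarith
    _ = ε := by ring
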